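/- For k \in \mathbb{N}_0, the depth-one desingularized value satisfies \zeta_1^{des}(-k) = (-1)^k B_{k+1}, where \zeta_1^{des}(-k) := k! times the coefficient of (-t)^k in F(t) := ((1-t)e^t-1)/(e^t-1)^2 and B_m are the Bernoulli numbers. -/

import Mathlib

open PowerSeries

private lemma coeff_derivativeFun' (f : ℚ⟦X⟧) (n : ℕ) :
    coeff n f.derivativeFun = coeff (n + 1) f * (n + 1) :=
  coeff_derivative f n

private lemma derivFun_exp : (PowerSeries.exp ℚ).derivativeFun = PowerSeries.exp ℚ := by
  ext n
  rw [coeff_derivativeFun', PowerSeries.coeff_exp, PowerSeries.coeff_exp]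
  simp only [Nat.factorial_succ, eq_ratCast, Rat.cast_eq_id, id_eq]
  push_cast
  have : ((n : ℚ) + 1) ≠ 0 := by positivity
  field_simp

private lemma key : (PowerSeries.exp ℚ - 1) ^ 2 * (bernoulliPowerSeries ℚ).derivativeFun =
    (1 - PowerSeries.X) * PowerSeries.exp ℚ - 1 := by
  have h := bernoulliPowerSeries_mul_exp_sub_one ℚ
  have hd := congrArg PowerSeries.derivativeFun h
  rw [PowerSeries.derivativeFun_mul] at hd
  have hX : (PowerSeries.X : ℚ⟦X⟧).derivativeFun = 1 := by
    ext n
    rw [coeff_derivativeFun']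
    simp [PowerSeries.coeff_X, PowerSeries.coeff_one]
    rcases n with _ | n <;> simp
  rw [hX] at hd
  have hdsub : (PowerSeries.exp ℚ - 1).derivativeFun = PowerSeries.exp ℚ := by
    ext n
    rw [coeff_derivativeFun', map_sub, PowerSeries.coeff_one,
      if_neg (Nat.succ_ne_zero n), sub_zero, ← coeff_derivativeFun', derivFun_exp]
  rw [hdsub] at hd
  -- hd : B • exp + (exp - 1) • D = 1
  have hd' : bernoulliPowerSeries ℚ * PowerSeries.exp ℚ +
      (PowerSeries.exp ℚ - 1) * (bernoulliPowerSeries ℚ).derivativeFun = 1 := by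
    simpa [smul_eq_mul] using hd
  have := congrArg (fun g => (PowerSeries.exp ℚ - 1) * g) hd'
  simp only [mul_add, mul_one] at this
  -- (e-1)*B*e + (e-1)^2*D = e-1
  have hBe : (PowerSeries.exp ℚ - 1) * (bernoulliPowerSeries ℚ * PowerSeries.exp ℚ)
      = PowerSeries.X * PowerSeries.exp ℚ := by
    rw [← mul_assoc, mul_comm (PowerSeries.exp ℚ - 1), h]
  rw [hBe] at this
  have : (PowerSeries.exp ℚ - 1) ^ 2 * (bernoulliPowerSeries ℚ).derivativeFun
      = PowerSeries.exp ℚ - 1 - PowerSeries.X * PowerSeries.exp ℚ := by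
    rw [sq, mul_assoc]; linear_combination this
  rw [this]; ring

/-- The depth-one value attached to a one-variable power series `f`:
`k!` times the coefficient of `(-t)^k` in `f`. -/
noncomputable def zetaOne (f : PowerSeries ℚ) (k : ℕ) : ℚ :=
  (-1 : ℚ) ^ k * (k.factorial : ℚ) * PowerSeries.coeff k f

/-- For `k ∈ ℕ₀`, the depth-one desingularized value satisfies
`ζ_1^{des}(-k) = (-1)^k B_{k+1}`, where `ζ_1^{des}(-k) = k![(-t)^k] F(t)` with
`F(t) = ((1-t)e^t-1)/(e^t-1)^2` and `B_m` the Bernoulli numbers. -/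
theorem zetaDes_one_eq_bernoulli (F : PowerSeries ℚ)
    (hF : (PowerSeries.exp ℚ - 1) ^ 2 * F =
      (1 - PowerSeries.X) * PowerSeries.exp ℚ - 1) (k : ℕ) :
    zetaOne F k = (-1 : ℚ) ^ k * bernoulli (k + 1) := by
  have hne : (PowerSeries.exp ℚ - 1) ^ 2 ≠ 0 := by
    apply pow_ne_zero
    intro h
    have := congrArg (PowerSeries.coeff 1) h
    simp [PowerSeries.coeff_exp] at this
  have hFD : F = (bernoulliPowerSeries ℚ).derivativeFun := by
    have := hF.trans key.symm
    exact mul_left_cancel₀ hne this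
  have hcoeff : PowerSeries.coeff k F = bernoulli (k + 1) / k.factorial := by
    rw [hFD, coeff_derivativeFun', bernoulliPowerSeries, PowerSeries.coeff_mk]
    simp only [eq_ratCast, Rat.cast_eq_id, id_eq]
    rw [Nat.factorial_succ]
    push_cast
    have : ((k : ℚ) + 1) ≠ 0 := by positivity
    field_simp
  rw [zetaOne, hcoeff]
  have : (k.factorial : ℚ) ≠ 0 := Nat.cast_ne_zero.mpr k.factorial_ne_zero
  field_simp
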